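/- Let C be a finite set of m parties, c_1 ∈ C, and A ⊆ C with c_1 ∈ A. Let there be n voters, each voter i having an original linear order O_i on C and a nonnegative cost function π_i on linear orders of C (π_i(Ô) is the cost of changing voter i's order to Ô). Define h_i(k', k'_1) as the infimum of π_i(Ô) over linear orders Ô with Borda(Ô, A∖{c_1}) = k' and Borda(Ô, c_1) = k'_1, and define F(i, k_A, k_1) as the infimum of Σ_{j≤i} π_j(Ô_j) over tuples (Ô_1,…,Ô_i) of linear orders with Σ_{j≤i} Borda(Ô_j, A) = k_A and Σ_{j≤i} Borda(Ô_j, c_1) = k_1 (infima being ∞ when no such orders exist). Then F(1, k_A, k_1) = h_1(k_A − k_1, k_1), and for every 1 ≤ i < n: F(i+1, k_A, k_1) = min over integers k'_A, k'_1 with 0 ≤ k'_1 ≤ k'_A ≤ k_A and k'_1 ≤ k_1 of h_{i+1}(k'_A − k'_1, k'_1) + F(i, k_A − k'_A, k_1 − k'_1), with the conventions ∞ + x = ∞ and that the minimum over an empty set is ∞. -/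
import Mathlib


open Finset

namespace Stmt12

/-- The Borda score of party `c` under the linear order `O`:
`Borda(O,c) = m − pos(O,c)`, where `pos(O,c) = (O c).val + 1`. -/
def borda {C : Type*} [Fintype C] (O : C ≃ Fin (Fintype.card C)) (c : C) : ℕ :=
  Fintype.card C - 1 - (O c).val

/-- The total Borda score of a set `S` of parties. -/
def bordaSum {C : Type*} [Fintype C] (O : C ≃ Fin (Fintype.card C)) (S : Finset C) : ℕ :=
  ∑ c ∈ S, borda O c

/-- `h_i(k', k'_1)`: the least cost of a bribe `Ob` of voter `i` with
`Borda(Ob, A∖{c₁}) = k'` and `Borda(Ob, c₁) = k'_1` (`⊤` if none exists). -/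
noncomputable def hcost {C : Type*} [Fintype C] [DecidableEq C] (c1 : C) (A : Finset C)
    (π : ℕ → (C ≃ Fin (Fintype.card C)) → ℝ) (i : ℕ) (k' k1 : ℤ) : EReal :=
  sInf { x : EReal | ∃ Ob : C ≃ Fin (Fintype.card C),
    (bordaSum Ob (A.erase c1) : ℤ) = k' ∧ (borda Ob c1 : ℤ) = k1 ∧
    x = ((π i Ob : ℝ) : EReal) }

/-- `F(i, k_A, k_1)`: the least total cost of bribes of voters `1, …, i` under which the
coalition `A` gets `k_A` Borda points and `c₁` gets `k_1` Borda points in total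
(`⊤` if none exists). -/
noncomputable def Fcost {C : Type*} [Fintype C] [DecidableEq C] (c1 : C) (A : Finset C)
    (π : ℕ → (C ≃ Fin (Fintype.card C)) → ℝ) (i : ℕ) (kA k1 : ℤ) : EReal :=
  sInf { x : EReal | ∃ Ob : ℕ → (C ≃ Fin (Fintype.card C)),
    (∑ j ∈ Finset.Icc 1 i, (bordaSum (Ob j) A : ℤ)) = kA ∧
    (∑ j ∈ Finset.Icc 1 i, (borda (Ob j) c1 : ℤ)) = k1 ∧
    x = ((∑ j ∈ Finset.Icc 1 i, π j (Ob j) : ℝ) : EReal) }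

section Aux

variable {C : Type*} [Fintype C] [DecidableEq C] (c1 : C) (A : Finset C)
  (π : ℕ → (C ≃ Fin (Fintype.card C)) → ℝ)

lemma bordaSum_split (hc1 : c1 ∈ A) (Ob : C ≃ Fin (Fintype.card C)) :
    (bordaSum Ob A : ℤ) = (bordaSum Ob (A.erase c1) : ℤ) + (borda Ob c1 : ℤ) := by
  have := Finset.add_sum_erase A (borda Ob) hc1
  unfold bordaSum
  push_cast [← this]
  ring

lemma Icc_succ (i : ℕ) : Finset.Icc 1 (i + 1) = insert (i + 1) (Finset.Icc 1 i) :=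
  (Finset.insert_Icc_right_eq_Icc_add_one (by omega)).symm

lemma notMem_Icc_succ (i : ℕ) : i + 1 ∉ Finset.Icc 1 i := by simp

/-- Attainment for `hcost`. -/
lemma hcost_attained (i : ℕ) (k' k1 : ℤ) (h : hcost c1 A π i k' k1 ≠ ⊤) :
    ∃ Ob : C ≃ Fin (Fintype.card C),
      (bordaSum Ob (A.erase c1) : ℤ) = k' ∧ (borda Ob c1 : ℤ) = k1 ∧
      hcost c1 A π i k' k1 = ((π i Ob : ℝ) : EReal) := by
  have hrfl : hcost c1 A π i k' k1 = sInf { x : EReal | ∃ Ob : C ≃ Fin (Fintype.card C),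
      (bordaSum Ob (A.erase c1) : ℤ) = k' ∧ (borda Ob c1 : ℤ) = k1 ∧
      x = ((π i Ob : ℝ) : EReal) } := rfl
  obtain he | hne := Set.eq_empty_or_nonempty { x : EReal | ∃ Ob : C ≃ Fin (Fintype.card C),
      (bordaSum Ob (A.erase c1) : ℤ) = k' ∧ (borda Ob c1 : ℤ) = k1 ∧
      x = ((π i Ob : ℝ) : EReal) }
  · exact absurd (by rw [hrfl, he, sInf_empty]) h
  have hfin : Set.Finite { x : EReal | ∃ Ob : C ≃ Fin (Fintype.card C),
      (bordaSum Ob (A.erase c1) : ℤ) = k' ∧ (borda Ob c1 : ℤ) = k1 ∧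
      x = ((π i Ob : ℝ) : EReal) } := by
    apply Set.Finite.subset (Set.finite_range
      (fun Ob : C ≃ Fin (Fintype.card C) => ((π i Ob : ℝ) : EReal)))
    rintro x ⟨Ob, -, -, rfl⟩
    exact ⟨Ob, rfl⟩
  obtain ⟨Ob, h1, h2, h3⟩ := hne.csInf_mem hfin
  exact ⟨Ob, h1, h2, hrfl.trans h3⟩

/-- Attainment for `Fcost`. -/
lemma Fcost_attained (i : ℕ) (kA k1 : ℤ) (h : Fcost c1 A π i kA k1 ≠ ⊤) :
    ∃ Ob : ℕ → (C ≃ Fin (Fintype.card C)),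
      (∑ j ∈ Finset.Icc 1 i, (bordaSum (Ob j) A : ℤ)) = kA ∧
      (∑ j ∈ Finset.Icc 1 i, (borda (Ob j) c1 : ℤ)) = k1 ∧
      Fcost c1 A π i kA k1 = ((∑ j ∈ Finset.Icc 1 i, π j (Ob j) : ℝ) : EReal) := by
  have hrfl : Fcost c1 A π i kA k1 = sInf { x : EReal |
      ∃ Ob : ℕ → (C ≃ Fin (Fintype.card C)),
      (∑ j ∈ Finset.Icc 1 i, (bordaSum (Ob j) A : ℤ)) = kA ∧
      (∑ j ∈ Finset.Icc 1 i, (borda (Ob j) c1 : ℤ)) = k1 ∧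
      x = ((∑ j ∈ Finset.Icc 1 i, π j (Ob j) : ℝ) : EReal) } := rfl
  obtain he | hne := Set.eq_empty_or_nonempty { x : EReal |
      ∃ Ob : ℕ → (C ≃ Fin (Fintype.card C)),
      (∑ j ∈ Finset.Icc 1 i, (bordaSum (Ob j) A : ℤ)) = kA ∧
      (∑ j ∈ Finset.Icc 1 i, (borda (Ob j) c1 : ℤ)) = k1 ∧
      x = ((∑ j ∈ Finset.Icc 1 i, π j (Ob j) : ℝ) : EReal) }
  · exact absurd (by rw [hrfl, he, sInf_empty]) h
  have hfin : Set.Finite { x : EReal |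
      ∃ Ob : ℕ → (C ≃ Fin (Fintype.card C)),
      (∑ j ∈ Finset.Icc 1 i, (bordaSum (Ob j) A : ℤ)) = kA ∧
      (∑ j ∈ Finset.Icc 1 i, (borda (Ob j) c1 : ℤ)) = k1 ∧
      x = ((∑ j ∈ Finset.Icc 1 i, π j (Ob j) : ℝ) : EReal) } := by
    apply Set.Finite.subset (Set.finite_range
      (fun v : (Finset.Icc 1 i : Finset ℕ) → (C ≃ Fin (Fintype.card C)) =>
        ((∑ j ∈ (Finset.Icc 1 i).attach, π j.1 (v j) : ℝ) : EReal)))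
    rintro x ⟨Ob, -, -, rfl⟩
    refine ⟨fun j => Ob j.1, ?_⟩
    congr 1
    exact_mod_cast congrArg _ (Finset.sum_attach (Finset.Icc 1 i) (fun j => π j (Ob j)))
  obtain ⟨Ob, h1, h2, h3⟩ := hne.csInf_mem hfin
  exact ⟨Ob, h1, h2, hrfl.trans h3⟩

lemma hcost_nonneg (hπ : ∀ i Ob, 0 ≤ π i Ob) (i : ℕ) (k' k1 : ℤ) :
    (0 : EReal) ≤ hcost c1 A π i k' k1 := by
  apply le_sInf
  rintro x ⟨Ob, -, -, rfl⟩
  exact_mod_cast hπ i Ob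

lemma Fcost_nonneg (hπ : ∀ i Ob, 0 ≤ π i Ob) (i : ℕ) (kA k1 : ℤ) :
    (0 : EReal) ≤ Fcost c1 A π i kA k1 := by
  apply le_sInf
  rintro x ⟨Ob, -, -, rfl⟩
  have : (0:ℝ) ≤ ∑ j ∈ Finset.Icc 1 i, π j (Ob j) :=
    Finset.sum_nonneg fun j _ => hπ j (Ob j)
  exact_mod_cast this

end Aux

/-- the dynamic-programming recurrence for `F`:
`F(1,k_A,k_1) = h_1(k_A−k_1, k_1)` and, for `1 ≤ i < n`,
`F(i+1,k_A,k_1) = min h_{i+1}(k'_A−k'_1,k'_1) + F(i, k_A−k'_A, k_1−k'_1)`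
over `0 ≤ k'_1 ≤ k'_A ≤ k_A`, `k'_1 ≤ k_1`. -/
theorem stmt_12 {C : Type*} [Fintype C] [DecidableEq C] (c1 : C) (A : Finset C)
    (hc1 : c1 ∈ A) (n : ℕ)
    (O : ℕ → (C ≃ Fin (Fintype.card C)))
    (π : ℕ → (C ≃ Fin (Fintype.card C)) → ℝ) (hπ : ∀ i Ob, 0 ≤ π i Ob) :
    (∀ kA k1 : ℤ, Fcost c1 A π 1 kA k1 = hcost c1 A π 1 (kA - k1) k1) ∧
    (∀ i : ℕ, 1 ≤ i → i < n → ∀ kA k1 : ℤ,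
      Fcost c1 A π (i + 1) kA k1 =
        sInf { x : EReal | ∃ kA' k1' : ℤ,
          0 ≤ k1' ∧ k1' ≤ kA' ∧ kA' ≤ kA ∧ k1' ≤ k1 ∧
          x = hcost c1 A π (i + 1) (kA' - k1') k1' +
              Fcost c1 A π i (kA - kA') (k1 - k1') }) := by
  constructor
  · -- base case
    intro kA k1
    unfold Fcost hcost
    congr 1
    ext x
    constructor
    · rintro ⟨Ob, hA, h1, rfl⟩
      simp only [Finset.Icc_self, Finset.sum_singleton] at hA h1 ⊢
      refine ⟨Ob 1, ?_, h1, rfl⟩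
      have := bordaSum_split c1 A hc1 (Ob 1)
      omega
    · rintro ⟨Ob, hA, h1, rfl⟩
      refine ⟨fun _ => Ob, ?_, ?_, ?_⟩
      · simp only [Finset.Icc_self, Finset.sum_singleton]
        have := bordaSum_split c1 A hc1 Ob
        omega
      · simp only [Finset.Icc_self, Finset.sum_singleton]
        exact h1
      · simp only [Finset.Icc_self, Finset.sum_singleton]
  · -- recurrence
    intro i hi1 hin kA k1
    apply le_antisymm
    · -- Fcost (i+1) ≤ sInf RHS
      apply le_sInf
      rintro x ⟨kA', k1', h0, h1A, hAk, h1k, rfl⟩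
      by_cases hh : hcost c1 A π (i + 1) (kA' - k1') k1' = ⊤
      · rw [hh, EReal.top_add_of_ne_bot]
        · exact le_top
        · exact ne_bot_of_le_ne_bot (by simp) (Fcost_nonneg c1 A π hπ i _ _)
      by_cases hF : Fcost c1 A π i (kA - kA') (k1 - k1') = ⊤
      · rw [hF, EReal.add_top_of_ne_bot]
        · exact le_top
        · exact ne_bot_of_le_ne_bot (by simp) (hcost_nonneg c1 A π hπ (i+1) _ _)
      obtain ⟨Os, hOs1, hOs2, hOs3⟩ := hcost_attained c1 A π (i + 1) (kA' - k1') k1' hh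
      obtain ⟨Ob, hOb1, hOb2, hOb3⟩ := Fcost_attained c1 A π i (kA - kA') (k1 - k1') hF
      have hupd : ∀ j ∈ Finset.Icc 1 i, Function.update Ob (i + 1) Os j = Ob j := by
        intro j hj
        have := Finset.mem_Icc.mp hj
        exact Function.update_of_ne (by omega) _ _
      apply sInf_le
      refine ⟨Function.update Ob (i + 1) Os, ?_, ?_, ?_⟩
      · rw [Icc_succ, Finset.sum_insert (notMem_Icc_succ i), Function.update_self,
          Finset.sum_congr rfl (fun j hj => by rw [hupd j hj])]
        have := bordaSum_split c1 A hc1 Os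
        omega
      · rw [Icc_succ, Finset.sum_insert (notMem_Icc_succ i), Function.update_self,
          Finset.sum_congr rfl (fun j hj => by rw [hupd j hj])]
        omega
      · rw [Icc_succ, Finset.sum_insert (notMem_Icc_succ i), Function.update_self,
          Finset.sum_congr rfl (fun j hj => by rw [hupd j hj]),
          hOs3, hOb3, EReal.coe_add]
    · -- sInf RHS ≤ Fcost (i+1)
      apply le_sInf
      rintro x ⟨Ob, hA, h1, rfl⟩
      rw [Icc_succ, Finset.sum_insert (notMem_Icc_succ i)] at hA h1
      have hsA : (0:ℤ) ≤ ∑ j ∈ Finset.Icc 1 i, (bordaSum (Ob j) A : ℤ) :=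
        Finset.sum_nonneg fun j _ => Int.ofNat_nonneg _
      have hs1 : (0:ℤ) ≤ ∑ j ∈ Finset.Icc 1 i, (borda (Ob j) c1 : ℤ) :=
        Finset.sum_nonneg fun j _ => Int.ofNat_nonneg _
      have hsplit := bordaSum_split c1 A hc1 (Ob (i + 1))
      have hEk : (0:ℤ) ≤ (bordaSum (Ob (i+1)) (A.erase c1) : ℤ) := Int.ofNat_nonneg _
      set kA' : ℤ := (bordaSum (Ob (i + 1)) A : ℤ) with hkA'
      set k1' : ℤ := (borda (Ob (i + 1)) c1 : ℤ) with hk1'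
      have hle : sInf { x : EReal | ∃ kA' k1' : ℤ,
          0 ≤ k1' ∧ k1' ≤ kA' ∧ kA' ≤ kA ∧ k1' ≤ k1 ∧
          x = hcost c1 A π (i + 1) (kA' - k1') k1' +
              Fcost c1 A π i (kA - kA') (k1 - k1') } ≤
          hcost c1 A π (i + 1) (kA' - k1') k1' +
              Fcost c1 A π i (kA - kA') (k1 - k1') := by
        apply sInf_le
        exact ⟨kA', k1', Int.ofNat_nonneg _, by omega, by omega, by omega, rfl⟩
      refine hle.trans ?_
      rw [show ((∑ j ∈ Finset.Icc 1 (i+1), π j (Ob j) : ℝ) : EReal)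
          = ((π (i+1) (Ob (i+1)) : ℝ) : EReal)
            + ((∑ j ∈ Finset.Icc 1 i, π j (Ob j) : ℝ) : EReal) by
        rw [Icc_succ, Finset.sum_insert (notMem_Icc_succ i), EReal.coe_add]]
      apply add_le_add
      · apply sInf_le
        exact ⟨Ob (i + 1), by omega, rfl, rfl⟩
      · apply sInf_le
        exact ⟨Ob, by omega, by omega, rfl⟩

end Stmt12
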